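/- Let M = [[0, xᵀ, a, 0],[y, 0, 0, 0],[b, 0, 0, zᵀ],[0, 0, w, 0]] be the block matrix associated with a double star digraph (a, b nonzero scalars, x, y ∈ ℂᵐ, z, w ∈ ℂⁿ). If xᵀy = 0 and zᵀw = 0, then the matrix D = (ab)⁻¹·[[0, xᵀ, a, 0],[y, 0, 0, b⁻¹ y zᵀ],[b, 0, 0, zᵀ],[0, a⁻¹ w xᵀ, w, 0]] satisfies M³D = M², DMD = D, and MD = DM; i.e. D is the Drazin inverse of M and the Drazin index of M is at most 2. -/

import Mathlib

open Matrix BigOperators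

noncomputable section

abbrev Idx (m n : ℕ) := (Unit ⊕ Fin m) ⊕ (Unit ⊕ Fin n)

/-- 4×4 block builder for matrices indexed by a double star digraph vertex set:
the blocks correspond to the first center, the first star's leaves, the second
center and the second star's leaves, in this order. -/
def blk {m n : ℕ}
    (A11 : ℂ) (A12 : Fin m → ℂ) (A13 : ℂ) (A14 : Fin n → ℂ)
    (A21 : Fin m → ℂ) (A22 : Fin m → Fin m → ℂ) (A23 : Fin m → ℂ) (A24 : Fin m → Fin n → ℂ)
    (A31 : ℂ) (A32 : Fin m → ℂ) (A33 : ℂ) (A34 : Fin n → ℂ)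
    (A41 : Fin n → ℂ) (A42 : Fin n → Fin m → ℂ) (A43 : Fin n → ℂ) (A44 : Fin n → Fin n → ℂ) :
    Matrix (Idx m n) (Idx m n) ℂ :=
  Matrix.of fun i j =>
    match i, j with
    | .inl (.inl _), .inl (.inl _) => A11
    | .inl (.inl _), .inl (.inr k) => A12 k
    | .inl (.inl _), .inr (.inl _) => A13
    | .inl (.inl _), .inr (.inr k) => A14 k
    | .inl (.inr i'), .inl (.inl _) => A21 i'
    | .inl (.inr i'), .inl (.inr k) => A22 i' k
    | .inl (.inr i'), .inr (.inl _) => A23 i'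
    | .inl (.inr i'), .inr (.inr k) => A24 i' k
    | .inr (.inl _), .inl (.inl _) => A31
    | .inr (.inl _), .inl (.inr k) => A32 k
    | .inr (.inl _), .inr (.inl _) => A33
    | .inr (.inl _), .inr (.inr k) => A34 k
    | .inr (.inr i'), .inl (.inl _) => A41 i'
    | .inr (.inr i'), .inl (.inr k) => A42 i' k
    | .inr (.inr i'), .inr (.inl _) => A43 i'
    | .inr (.inr i'), .inr (.inr k) => A44 i' k

/-- The canonical matrix `[[0, xᵀ, a, 0],[y, 0, 0, 0],[b, 0, 0, zᵀ],[0, 0, w, 0]]`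
associated with a double star digraph. -/
def dsM {m n : ℕ} (a b : ℂ) (x y : Fin m → ℂ) (z w : Fin n → ℂ) :
    Matrix (Idx m n) (Idx m n) ℂ :=
  blk 0 x a (fun _ => 0)
      y (fun _ _ => 0) (fun _ => 0) (fun _ _ => 0)
      b (fun _ => 0) 0 z
      (fun _ => 0) (fun _ _ => 0) w (fun _ _ => 0)

/-- `xᵀy`. -/
def dotT {k : ℕ} (x y : Fin k → ℂ) : ℂ := ∑ i, x i * y i

/-- `x*x = ∑ conj xᵢ · xᵢ`. -/
def gram {k : ℕ} (x : Fin k → ℂ) : ℂ := ∑ i, star (x i) * x i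

end

section DSAux
open Matrix BigOperators

set_option maxHeartbeats 2000000 in
theorem blk_mul {m n : ℕ}
    (A11 : ℂ) (A12 : Fin m → ℂ) (A13 : ℂ) (A14 : Fin n → ℂ)
    (A21 : Fin m → ℂ) (A22 : Fin m → Fin m → ℂ) (A23 : Fin m → ℂ) (A24 : Fin m → Fin n → ℂ)
    (A31 : ℂ) (A32 : Fin m → ℂ) (A33 : ℂ) (A34 : Fin n → ℂ)
    (A41 : Fin n → ℂ) (A42 : Fin n → Fin m → ℂ) (A43 : Fin n → ℂ) (A44 : Fin n → Fin n → ℂ)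
    (B11 : ℂ) (B12 : Fin m → ℂ) (B13 : ℂ) (B14 : Fin n → ℂ)
    (B21 : Fin m → ℂ) (B22 : Fin m → Fin m → ℂ) (B23 : Fin m → ℂ) (B24 : Fin m → Fin n → ℂ)
    (B31 : ℂ) (B32 : Fin m → ℂ) (B33 : ℂ) (B34 : Fin n → ℂ)
    (B41 : Fin n → ℂ) (B42 : Fin n → Fin m → ℂ) (B43 : Fin n → ℂ) (B44 : Fin n → Fin n → ℂ) :
    blk A11 A12 A13 A14 A21 A22 A23 A24 A31 A32 A33 A34 A41 A42 A43 A44 *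
    blk B11 B12 B13 B14 B21 B22 B23 B24 B31 B32 B33 B34 B41 B42 B43 B44 =
    blk (A11*B11 + (∑ j, A12 j * B21 j) + A13*B31 + ∑ j, A14 j * B41 j)
        (fun k => A11*B12 k + (∑ j, A12 j * B22 j k) + A13*B32 k + ∑ j, A14 j * B42 j k)
        (A11*B13 + (∑ j, A12 j * B23 j) + A13*B33 + ∑ j, A14 j * B43 j)
        (fun k => A11*B14 k + (∑ j, A12 j * B24 j k) + A13*B34 k + ∑ j, A14 j * B44 j k)
        (fun i => A21 i*B11 + (∑ j, A22 i j * B21 j) + A23 i*B31 + ∑ j, A24 i j * B41 j)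
        (fun i k => A21 i*B12 k + (∑ j, A22 i j * B22 j k) + A23 i*B32 k + ∑ j, A24 i j * B42 j k)
        (fun i => A21 i*B13 + (∑ j, A22 i j * B23 j) + A23 i*B33 + ∑ j, A24 i j * B43 j)
        (fun i k => A21 i*B14 k + (∑ j, A22 i j * B24 j k) + A23 i*B34 k + ∑ j, A24 i j * B44 j k)
        (A31*B11 + (∑ j, A32 j * B21 j) + A33*B31 + ∑ j, A34 j * B41 j)
        (fun k => A31*B12 k + (∑ j, A32 j * B22 j k) + A33*B32 k + ∑ j, A34 j * B42 j k)
        (A31*B13 + (∑ j, A32 j * B23 j) + A33*B33 + ∑ j, A34 j * B43 j)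
        (fun k => A31*B14 k + (∑ j, A32 j * B24 j k) + A33*B34 k + ∑ j, A34 j * B44 j k)
        (fun i => A41 i*B11 + (∑ j, A42 i j * B21 j) + A43 i*B31 + ∑ j, A44 i j * B41 j)
        (fun i k => A41 i*B12 k + (∑ j, A42 i j * B22 j k) + A43 i*B32 k + ∑ j, A44 i j * B42 j k)
        (fun i => A41 i*B13 + (∑ j, A42 i j * B23 j) + A43 i*B33 + ∑ j, A44 i j * B43 j)
        (fun i k => A41 i*B14 k + (∑ j, A42 i j * B24 j k) + A43 i*B34 k + ∑ j, A44 i j * B44 j k) := by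
  ext i j
  rcases i with (i|i)|(i|i) <;> rcases j with (j|j)|(j|j) <;>
    simp [blk, Matrix.mul_apply, Fintype.sum_sum_type] <;> ring

theorem blk_smul {m n : ℕ} (c : ℂ)
    (A11 : ℂ) (A12 : Fin m → ℂ) (A13 : ℂ) (A14 : Fin n → ℂ)
    (A21 : Fin m → ℂ) (A22 : Fin m → Fin m → ℂ) (A23 : Fin m → ℂ) (A24 : Fin m → Fin n → ℂ)
    (A31 : ℂ) (A32 : Fin m → ℂ) (A33 : ℂ) (A34 : Fin n → ℂ)
    (A41 : Fin n → ℂ) (A42 : Fin n → Fin m → ℂ) (A43 : Fin n → ℂ) (A44 : Fin n → Fin n → ℂ) :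
    c • blk A11 A12 A13 A14 A21 A22 A23 A24 A31 A32 A33 A34 A41 A42 A43 A44 =
    blk (c*A11) (fun k => c*A12 k) (c*A13) (fun k => c*A14 k)
        (fun i => c*A21 i) (fun i k => c*A22 i k) (fun i => c*A23 i) (fun i k => c*A24 i k)
        (c*A31) (fun k => c*A32 k) (c*A33) (fun k => c*A34 k)
        (fun i => c*A41 i) (fun i k => c*A42 i k) (fun i => c*A43 i) (fun i k => c*A44 i k) := by
  ext i j
  rcases i with (i|i)|(i|i) <;> rcases j with (j|j)|(j|j) <;> simp [blk]

theorem blk_ext {m n : ℕ}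
    {A11 : ℂ} {A12 : Fin m → ℂ} {A13 : ℂ} {A14 : Fin n → ℂ}
    {A21 : Fin m → ℂ} {A22 : Fin m → Fin m → ℂ} {A23 : Fin m → ℂ} {A24 : Fin m → Fin n → ℂ}
    {A31 : ℂ} {A32 : Fin m → ℂ} {A33 : ℂ} {A34 : Fin n → ℂ}
    {A41 : Fin n → ℂ} {A42 : Fin n → Fin m → ℂ} {A43 : Fin n → ℂ} {A44 : Fin n → Fin n → ℂ}
    {B11 : ℂ} {B12 : Fin m → ℂ} {B13 : ℂ} {B14 : Fin n → ℂ}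
    {B21 : Fin m → ℂ} {B22 : Fin m → Fin m → ℂ} {B23 : Fin m → ℂ} {B24 : Fin m → Fin n → ℂ}
    {B31 : ℂ} {B32 : Fin m → ℂ} {B33 : ℂ} {B34 : Fin n → ℂ}
    {B41 : Fin n → ℂ} {B42 : Fin n → Fin m → ℂ} {B43 : Fin n → ℂ} {B44 : Fin n → Fin n → ℂ}
    (h11 : A11 = B11) (h12 : ∀ k, A12 k = B12 k) (h13 : A13 = B13) (h14 : ∀ k, A14 k = B14 k)
    (h21 : ∀ i, A21 i = B21 i) (h22 : ∀ i k, A22 i k = B22 i k)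
    (h23 : ∀ i, A23 i = B23 i) (h24 : ∀ i k, A24 i k = B24 i k)
    (h31 : A31 = B31) (h32 : ∀ k, A32 k = B32 k) (h33 : A33 = B33) (h34 : ∀ k, A34 k = B34 k)
    (h41 : ∀ i, A41 i = B41 i) (h42 : ∀ i k, A42 i k = B42 i k)
    (h43 : ∀ i, A43 i = B43 i) (h44 : ∀ i k, A44 i k = B44 i k) :
    blk A11 A12 A13 A14 A21 A22 A23 A24 A31 A32 A33 A34 A41 A42 A43 A44 =
    blk B11 B12 B13 B14 B21 B22 B23 B24 B31 B32 B33 B34 B41 B42 B43 B44 := by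
  ext i j
  rcases i with (i|i)|(i|i) <;> rcases j with (j|j)|(j|j) <;>
    simp_all [blk]

end DSAux
set_option maxHeartbeats 2000000 in
theorem dsM_drazin_caseI {m n : ℕ} (a b : ℂ) (ha : a ≠ 0) (hb : b ≠ 0)
    (x y : Fin m → ℂ) (z w : Fin n → ℂ)
    (hxy : dotT x y = 0) (hzw : dotT z w = 0) :
    letI M := dsM a b x y z w
    letI D := (a * b)⁻¹ • blk 0 x a (fun _ => 0)
        y (fun _ _ => 0) (fun _ => 0) (fun i j => b⁻¹ * y i * z j)
        b (fun _ => 0) 0 z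
        (fun _ => 0) (fun i j => a⁻¹ * w i * x j) w (fun _ _ => 0)
    M ^ 3 * D = M ^ 2 ∧ D * M * D = D ∧ M * D = D * M := by
  have hxy' : ∑ i, x i * y i = 0 := hxy
  have hzw' : ∑ i, z i * w i = 0 := hzw
  have hyx : ∑ i, y i * x i = 0 := by simpa [mul_comm] using hxy'
  have hwz : ∑ i, w i * z i = 0 := by simpa [mul_comm] using hzw'
  have key : ∀ {k : ℕ} {u v : Fin k → ℂ}, (∑ i, u i * v i = 0) →
      ∀ (f : Fin k → ℂ) (C : ℂ), (∀ i, f i = C * (u i * v i)) → ∑ i, f i = 0 := by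
    intro k u v h f C hf
    calc ∑ i, f i = C * ∑ i, u i * v i := by
          rw [Finset.mul_sum]; exact Finset.sum_congr rfl fun i _ => hf i
      _ = 0 := by rw [h, mul_zero]
  have L1x : ∀ c : ℂ, ∑ i, c * x i * y i = 0 := fun c => key hxy' _ c fun i => by ring
  have L2x : ∀ c d : ℂ, ∑ i, c * x i * d * y i = 0 := fun c d => key hxy' _ (c*d) fun i => by ring
  have L3x : ∀ c d : ℂ, ∑ i, c * x i * (y i * d) = 0 := fun c d => key hxy' _ (c*d) fun i => by ring
  have L4x : ∀ d : ℂ, ∑ i, x i * (y i * d) = 0 := fun d => key hxy' _ d fun i => by ring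
  have L5x : ∀ c d : ℂ, ∑ i, c * (x i * (y i * d)) = 0 := fun c d => key hxy' _ (c*d) fun i => by ring
  have L6x : ∀ c : ℂ, ∑ i, x i * c * y i = 0 := fun c => key hxy' _ c fun i => by ring
  have L7x : ∀ c d : ℂ, ∑ i, x i * y i * c * d = 0 := fun c d => key hxy' _ (c*d) fun i => by ring
  have L8x : ∀ c : ℂ, ∑ i, x i * y i * c = 0 := fun c => key hxy' _ c fun i => by ring
  have L9x : ∀ c d : ℂ, ∑ i, c * x i * y i * d = 0 := fun c d => key hxy' _ (c*d) fun i => by ring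
  have L1z : ∀ c : ℂ, ∑ i, c * z i * w i = 0 := fun c => key hzw' _ c fun i => by ring
  have L2z : ∀ c d : ℂ, ∑ i, c * z i * d * w i = 0 := fun c d => key hzw' _ (c*d) fun i => by ring
  have L3z : ∀ c d : ℂ, ∑ i, c * z i * (w i * d) = 0 := fun c d => key hzw' _ (c*d) fun i => by ring
  have L4z : ∀ d : ℂ, ∑ i, z i * (w i * d) = 0 := fun d => key hzw' _ d fun i => by ring
  have L5z : ∀ c d : ℂ, ∑ i, c * (z i * (w i * d)) = 0 := fun c d => key hzw' _ (c*d) fun i => by ring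
  have L6z : ∀ c : ℂ, ∑ i, z i * c * w i = 0 := fun c => key hzw' _ c fun i => by ring
  have L7z : ∀ c d : ℂ, ∑ i, z i * w i * c * d = 0 := fun c d => key hzw' _ (c*d) fun i => by ring
  have L8z : ∀ c : ℂ, ∑ i, z i * w i * c = 0 := fun c => key hzw' _ c fun i => by ring
  have hab : (a * b) ≠ 0 := mul_ne_zero ha hb
  set E : Matrix (Idx m n) (Idx m n) ℂ := blk 0 x a (fun _ => 0)
        y (fun _ _ => 0) (fun _ => 0) (fun i j => b⁻¹ * y i * z j)
        b (fun _ => 0) 0 z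
        (fun _ => 0) (fun i j => a⁻¹ * w i * x j) w (fun _ _ => 0) with hE
  set F : Matrix (Idx m n) (Idx m n) ℂ := blk (a*b) (fun _ => 0) 0 (fun k => a * z k)
        (fun _ => 0) (fun i k => y i * x k) (fun i => a * y i) (fun _ _ => 0)
        0 (fun k => b * x k) (a*b) (fun _ => 0)
        (fun i => b * w i) (fun _ _ => 0) (fun _ => 0) (fun i k => w i * z k) with hF
  have hM : dsM a b x y z w = blk 0 x a (fun _ => 0)
      y (fun _ _ => 0) (fun _ => 0) (fun _ _ => 0)
      b (fun _ => 0) 0 z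
      (fun _ => 0) (fun _ _ => 0) w (fun _ _ => 0) := rfl
  have hME : dsM a b x y z w * E = F := by
    rw [hM, hE, blk_mul, hF]
    apply blk_ext <;> intros <;>
      (try simp only [mul_zero, zero_mul, add_zero, zero_add, Finset.sum_const_zero]) <;>
      (try ring_nf) <;>
      (try simp [hxy', hzw', L1x, L2x, L3x, L4x, L5x, L6x, L7x, L8x, L1z, L2z, L3z, L4z, L5z, L6z, L7z, L8z]) <;>
      (try field_simp) <;> (try ring) <;> (try simp [L1x, L2x, L3x, L4x, L5x, L6x, L7x, L8x, L1z, L2z, L3z, L4z, L5z, L6z, L7z, L8z]) <;> (try rfl)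
  have hEM : E * dsM a b x y z w = F := by
    rw [hM, hE, blk_mul, hF]
    apply blk_ext <;> intros <;>
      (try simp only [mul_zero, zero_mul, add_zero, zero_add, Finset.sum_const_zero]) <;>
      (try ring_nf) <;>
      (try simp [hxy', hzw', L1x, L2x, L3x, L4x, L5x, L6x, L7x, L8x, L1z, L2z, L3z, L4z, L5z, L6z, L7z, L8z]) <;>
      (try field_simp) <;> (try ring) <;> (try simp [L1x, L2x, L3x, L4x, L5x, L6x, L7x, L8x, L1z, L2z, L3z, L4z, L5z, L6z, L7z, L8z]) <;> (try rfl)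
  have hMM : dsM a b x y z w * dsM a b x y z w = F := by
    rw [hM, blk_mul, hF]
    apply blk_ext <;> intros <;>
      (try simp only [mul_zero, zero_mul, add_zero, zero_add, Finset.sum_const_zero]) <;>
      (try ring_nf) <;>
      (try simp [hxy', hzw', L1x, L2x, L3x, L4x, L5x, L6x, L7x, L8x, L1z, L2z, L3z, L4z, L5z, L6z, L7z, L8z]) <;>
      (try field_simp) <;> (try ring) <;> (try simp [L1x, L2x, L3x, L4x, L5x, L6x, L7x, L8x, L1z, L2z, L3z, L4z, L5z, L6z, L7z, L8z]) <;> (try rfl)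
  have hFF : F * F = (a*b) • F := by
    rw [hF, blk_mul, blk_smul]
    apply blk_ext <;> intros <;>
      (try simp only [mul_zero, zero_mul, add_zero, zero_add, Finset.sum_const_zero]) <;>
      (try ring_nf) <;>
      (try simp [hxy', hzw', L1x, L2x, L3x, L4x, L5x, L6x, L7x, L8x, L1z, L2z, L3z, L4z, L5z, L6z, L7z, L8z]) <;>
      (try field_simp) <;> (try ring) <;> (try simp [L1x, L2x, L3x, L4x, L5x, L6x, L7x, L8x, L1z, L2z, L3z, L4z, L5z, L6z, L7z, L8z]) <;> (try rfl) <;> (try exact L9x _ _)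
  have hEF : E * F = (a*b) • E := by
    rw [hE, hF, blk_mul, blk_smul]
    apply blk_ext <;> intros <;>
      (try simp only [mul_zero, zero_mul, add_zero, zero_add, Finset.sum_const_zero]) <;>
      (try ring_nf) <;>
      (try simp [hxy', hzw', L1x, L2x, L3x, L4x, L5x, L6x, L7x, L8x, L1z, L2z, L3z, L4z, L5z, L6z, L7z, L8z]) <;>
      (try field_simp) <;> (try ring) <;> (try simp [L1x, L2x, L3x, L4x, L5x, L6x, L7x, L8x, L1z, L2z, L3z, L4z, L5z, L6z, L7z, L8z]) <;> (try rfl) <;> (try exact L9x _ _)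
  have hFE : F * E = (a*b) • E := by
    rw [← hEM, Matrix.mul_assoc, hME, hEF]
  have hsq : dsM a b x y z w ^ 2 = F := by rw [sq, hMM]
  refine ⟨?_, ?_, ?_⟩
  · show dsM a b x y z w ^ 3 * ((a*b)⁻¹ • E) = dsM a b x y z w ^ 2
    rw [Matrix.mul_smul, pow_succ, Matrix.mul_assoc, hME, hsq, hFF,
      smul_smul, inv_mul_cancel₀ hab, one_smul]
  · show ((a*b)⁻¹ • E) * dsM a b x y z w * ((a*b)⁻¹ • E) = (a*b)⁻¹ • E
    rw [Matrix.smul_mul, hEM, Matrix.smul_mul, Matrix.mul_smul, hFE,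
      smul_smul, smul_smul, mul_assoc, inv_mul_cancel₀ hab, mul_one]
  · show dsM a b x y z w * ((a*b)⁻¹ • E) = ((a*b)⁻¹ • E) * dsM a b x y z w
    rw [Matrix.mul_smul, hME, Matrix.smul_mul, hEM]
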